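/- Under ignorability, if the propensity score satisfies 0 < e(X) < 1 almost surely and the random variable A·Y/e(X) is integrable, then E[A·Y/e(X)] = E[Y₁]. -/

import Mathlib

open MeasureTheory ProbabilityTheory Real
open scoped ENNReal

section Aux

variable {Ω : Type*} {m mW : MeasurableSpace Ω} {m0 : MeasurableSpace Ω} {μ : Measure Ω}
  [IsProbabilityMeasure μ]

/-- a.e. bound on the conditional probability of a set. -/
lemma condexp_indicator_abs_le_one (hm : m ≤ m0) {S : Set Ω} (hS : MeasurableSet[m0] S) :
    ∀ᵐ x ∂μ, |(μ⟦S|m⟧) x| ≤ 1 := by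
  have h0 : 0 ≤ᵐ[μ] μ⟦S|m⟧ :=
    condExp_nonneg (Filter.Eventually.of_forall fun x => Set.indicator_nonneg (by simp) x)
  have h1 : μ⟦S|m⟧ ≤ᵐ[μ] μ[(fun _ => (1:ℝ))|m] := by
    refine condExp_mono ((integrable_const (1:ℝ)).indicator hS) (integrable_const 1) ?_
    refine Filter.Eventually.of_forall fun x => ?_
    classical
    by_cases hx : x ∈ S <;> simp [hx]
  have hc : μ[(fun _ => (1:ℝ))|m] = fun _ => (1:ℝ) := condExp_const (μ := μ) hm (1:ℝ)
  rw [hc] at h1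
  filter_upwards [h0, h1] with x h0x h1x
  simp only [Pi.zero_apply] at h0x
  rw [abs_le]
  exact ⟨by linarith, h1x⟩

lemma integrable_condexpS_mul (hm : m ≤ m0) {S : Set Ω} (hS : MeasurableSet[m0] S)
    {h : Ω → ℝ} (hh : Integrable h μ) (hhm : AEStronglyMeasurable h μ) :
    Integrable (fun x => (μ⟦S|m⟧) x * h x) μ := by
  refine hh.norm.mono' ?_ ?_
  · exact ((stronglyMeasurable_condExp.mono hm).aestronglyMeasurable).mul hhm
  · filter_upwards [condexp_indicator_abs_le_one (μ := μ) hm hS] with x hx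
    rw [Real.norm_eq_abs, abs_mul]
    calc |(μ⟦S|m⟧) x| * |h x| ≤ 1 * |h x| :=
          mul_le_mul_of_nonneg_right hx (abs_nonneg _)
      _ = ‖h x‖ := by rw [one_mul, Real.norm_eq_abs]

lemma ipw_aux (hm : m ≤ m0) (hmW : mW ≤ m0)
    {S : Set Ω} (hS : MeasurableSet[m0] S)
    (hprod : ∀ T : Set Ω, MeasurableSet[mW] T →
      (μ⟦T ∩ S|m⟧) =ᵐ[μ] fun ω => (μ⟦T|m⟧) ω * (μ⟦S|m⟧) ω)
    {s : Set Ω} (hs : MeasurableSet[m] s) :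
    ∀ ⦃Z : Ω → ℝ⦄, Integrable Z (μ.trim hmW) →
      ∫ x in s, S.indicator Z x ∂μ = ∫ x in s, (μ⟦S|m⟧) x * (μ[Z|m]) x ∂μ := by
  have hsm0 : MeasurableSet[m0] s := hm s hs
  refine @Integrable.induction Ω ℝ mW _ (μ.trim hmW)
    (fun Z => ∫ x in s, S.indicator Z x ∂μ = ∫ x in s, (μ⟦S|m⟧) x * (μ[Z|m]) x ∂μ)
    ?_ ?_ ?_ ?_
  · -- indicators
    intro c T hT hμT
    have hTm0 : MeasurableSet[m0] T := hmW T hT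
    have hind : S.indicator (T.indicator fun _ => c) = (T ∩ S).indicator fun _ => c := by
      funext x
      classical
      by_cases hxS : x ∈ S <;> by_cases hxT : x ∈ T <;>
        simp [Set.indicator, hxS, hxT]
    have hint1 : Integrable ((T ∩ S).indicator fun _ => c) μ :=
      (integrable_const c).indicator (hTm0.inter hS)
    have hintT : Integrable (T.indicator fun _ => c) μ :=
      (integrable_const c).indicator hTm0
    have hsmul : ∀ (U : Set Ω),
        (U.indicator fun _ => c) = c • (U.indicator fun _ => (1:ℝ)) := by
      intro U; funext x; classical
      by_cases hx : x ∈ U <;> simp [Set.indicator, hx]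
    have hceq : ∀ (U : Set Ω), Integrable (U.indicator fun _ => (c:ℝ)) μ →
        μ[(U.indicator fun _ => c)|m] =ᵐ[μ] fun x => c * (μ⟦U|m⟧) x := by
      intro U hU
      rw [hsmul U]
      filter_upwards [condExp_smul (μ := μ) (m := m) c (U.indicator fun _ => (1:ℝ))] with x hx
      rw [hx]; simp
    calc ∫ x in s, S.indicator (T.indicator fun _ => c) x ∂μ
        = ∫ x in s, (T ∩ S).indicator (fun _ => c) x ∂μ := by rw [hind]
      _ = ∫ x in s, (μ[(T ∩ S).indicator (fun _ => c)|m]) x ∂μ :=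
          (setIntegral_condExp hm hint1 hs).symm
      _ = ∫ x in s, c * (μ⟦T ∩ S|m⟧) x ∂μ := by
          refine integral_congr_ae (ae_restrict_of_ae ?_)
          exact hceq _ hint1
      _ = ∫ x in s, c * ((μ⟦T|m⟧) x * (μ⟦S|m⟧) x) ∂μ := by
          refine integral_congr_ae (ae_restrict_of_ae ?_)
          filter_upwards [hprod T hT] with x hx
          rw [hx]
      _ = ∫ x in s, (μ⟦S|m⟧) x * (μ[(T.indicator fun _ => c)|m]) x ∂μ := by
          refine integral_congr_ae (ae_restrict_of_ae ?_)
          filter_upwards [hceq T hintT] with x hx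
          rw [hx]; ring
  · -- additivity
    intro f g hdisj hf hg hPf hPg
    have hf' : Integrable f μ := integrable_of_integrable_trim hmW hf
    have hg' : Integrable g μ := integrable_of_integrable_trim hmW hg
    have hif : Integrable (S.indicator f) μ := hf'.indicator hS
    have hig : Integrable (S.indicator g) μ := hg'.indicator hS
    have hand : S.indicator (f + g) = S.indicator f + S.indicator g :=
      Set.indicator_add S f g
    have hcf : Integrable (fun x => (μ⟦S|m⟧) x * (μ[f|m]) x) μ :=
      integrable_condexpS_mul hm hS integrable_condExp
        (stronglyMeasurable_condExp.mono hm).aestronglyMeasurable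
    have hcg : Integrable (fun x => (μ⟦S|m⟧) x * (μ[g|m]) x) μ :=
      integrable_condexpS_mul hm hS integrable_condExp
        (stronglyMeasurable_condExp.mono hm).aestronglyMeasurable
    calc ∫ x in s, S.indicator (f + g) x ∂μ
        = ∫ x in s, (S.indicator f x + S.indicator g x) ∂μ := by rw [hand]; rfl
      _ = ∫ x in s, S.indicator f x ∂μ + ∫ x in s, S.indicator g x ∂μ :=
          integral_add hif.integrableOn hig.integrableOn
      _ = ∫ x in s, (μ⟦S|m⟧) x * (μ[f|m]) x ∂μ + ∫ x in s, (μ⟦S|m⟧) x * (μ[g|m]) x ∂μ := by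
          rw [hPf, hPg]
      _ = ∫ x in s, ((μ⟦S|m⟧) x * (μ[f|m]) x + (μ⟦S|m⟧) x * (μ[g|m]) x) ∂μ :=
          (integral_add hcf.integrableOn hcg.integrableOn).symm
      _ = ∫ x in s, (μ⟦S|m⟧) x * (μ[f + g|m]) x ∂μ := by
          refine integral_congr_ae (ae_restrict_of_ae ?_)
          filter_upwards [condExp_add (μ := μ) (m := m) hf' hg'] with x hx
          rw [hx]; simp [mul_add]
  · -- closedness
    have hdist : ∀ f g : Lp ℝ 1 (μ.trim hmW), ∫ x, |f x - g x| ∂μ = dist f g := by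
      intro f g
      have h1 : (fun x => |f x - g x|) =ᵐ[μ.trim hmW] fun x => ‖(f - g : Lp ℝ 1 (μ.trim hmW)) x‖ := by
        filter_upwards [Lp.coeFn_sub f g] with x hx
        rw [hx]; simp [Real.norm_eq_abs]
      have h1' : (fun x => |f x - g x|) =ᵐ[μ] fun x => ‖(f - g : Lp ℝ 1 (μ.trim hmW)) x‖ :=
        ae_eq_of_ae_eq_trim h1
      rw [integral_congr_ae h1',
        integral_trim_ae hmW (Lp.aestronglyMeasurable (f - g)).norm,
        dist_eq_norm, L1.norm_eq_integral_norm]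
    have hestF : ∀ f g : Lp ℝ 1 (μ.trim hmW),
        |(∫ x in s, S.indicator (⇑f) x ∂μ) - ∫ x in s, S.indicator (⇑g) x ∂μ|
          ≤ ∫ x, |f x - g x| ∂μ := by
      intro f g
      have hf' : Integrable (⇑f) μ := integrable_of_integrable_trim hmW (L1.integrable_coeFn f)
      have hg' : Integrable (⇑g) μ := integrable_of_integrable_trim hmW (L1.integrable_coeFn g)
      have hsub : Integrable (fun x => |f x - g x|) μ := (hf'.sub hg').abs
      rw [← integral_sub (hf'.indicator hS).integrableOn (hg'.indicator hS).integrableOn]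
      calc |∫ x in s, (S.indicator (⇑f) x - S.indicator (⇑g) x) ∂μ|
          ≤ ∫ x in s, |S.indicator (⇑f) x - S.indicator (⇑g) x| ∂μ := by
            simpa [Real.norm_eq_abs] using norm_integral_le_integral_norm
              (fun x => S.indicator (⇑f) x - S.indicator (⇑g) x)
        _ ≤ ∫ x in s, |f x - g x| ∂μ := by
            refine setIntegral_mono_on ((hf'.indicator hS).sub (hg'.indicator hS)).abs.integrableOn
              hsub.integrableOn hsm0 fun x _ => ?_
            classical
            by_cases hx : x ∈ S <;> simp [Set.indicator, hx, abs_nonneg]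
        _ ≤ ∫ x, |f x - g x| ∂μ :=
            setIntegral_le_integral hsub (Filter.Eventually.of_forall fun x => abs_nonneg _)
    have hestG : ∀ f g : Lp ℝ 1 (μ.trim hmW),
        |(∫ x in s, (μ⟦S|m⟧) x * (μ[⇑f|m]) x ∂μ) - ∫ x in s, (μ⟦S|m⟧) x * (μ[⇑g|m]) x ∂μ|
          ≤ ∫ x, |f x - g x| ∂μ := by
      intro f g
      have hf' : Integrable (⇑f) μ := integrable_of_integrable_trim hmW (L1.integrable_coeFn f)
      have hg' : Integrable (⇑g) μ := integrable_of_integrable_trim hmW (L1.integrable_coeFn g)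
      have hcf : Integrable (fun x => (μ⟦S|m⟧) x * (μ[⇑f|m]) x) μ :=
        integrable_condexpS_mul hm hS integrable_condExp
          (stronglyMeasurable_condExp.mono hm).aestronglyMeasurable
      have hcg : Integrable (fun x => (μ⟦S|m⟧) x * (μ[⇑g|m]) x) μ :=
        integrable_condexpS_mul hm hS integrable_condExp
          (stronglyMeasurable_condExp.mono hm).aestronglyMeasurable
      have hcd : Integrable (fun x => |(μ[⇑f|m]) x - (μ[⇑g|m]) x|) μ :=
        (integrable_condExp.sub integrable_condExp).abs
      rw [← integral_sub hcf.integrableOn hcg.integrableOn]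
      calc |∫ x in s, ((μ⟦S|m⟧) x * (μ[⇑f|m]) x - (μ⟦S|m⟧) x * (μ[⇑g|m]) x) ∂μ|
          ≤ ∫ x in s, |(μ⟦S|m⟧) x * (μ[⇑f|m]) x - (μ⟦S|m⟧) x * (μ[⇑g|m]) x| ∂μ := by
            simpa [Real.norm_eq_abs] using norm_integral_le_integral_norm
              (fun x => (μ⟦S|m⟧) x * (μ[⇑f|m]) x - (μ⟦S|m⟧) x * (μ[⇑g|m]) x)
        _ ≤ ∫ x in s, |(μ[⇑f|m]) x - (μ[⇑g|m]) x| ∂μ := by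
            refine integral_mono_ae (hcf.sub hcg).abs.integrableOn hcd.integrableOn ?_
            refine ae_restrict_of_ae ?_
            filter_upwards [condexp_indicator_abs_le_one (μ := μ) hm hS] with x hx
            rw [← mul_sub, abs_mul]
            calc |(μ⟦S|m⟧) x| * |(μ[⇑f|m]) x - (μ[⇑g|m]) x|
                ≤ 1 * |(μ[⇑f|m]) x - (μ[⇑g|m]) x| :=
                  mul_le_mul_of_nonneg_right hx (abs_nonneg _)
              _ = _ := one_mul _
        _ ≤ ∫ x, |(μ[⇑f|m]) x - (μ[⇑g|m]) x| ∂μ :=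
            setIntegral_le_integral hcd (Filter.Eventually.of_forall fun x => abs_nonneg _)
        _ = ∫ x, |(μ[(⇑f - ⇑g)|m]) x| ∂μ := by
            refine integral_congr_ae ?_
            filter_upwards [condExp_sub (μ := μ) (m := m) hf' hg'] with x hx
            rw [hx]; simp
        _ ≤ ∫ x, |(⇑f - ⇑g) x| ∂μ := integral_abs_condExp_le _
        _ = ∫ x, |f x - g x| ∂μ := by simp
    have hFcont : Continuous fun f : Lp ℝ 1 (μ.trim hmW) => ∫ x in s, S.indicator (⇑f) x ∂μ := by
      refine (LipschitzWith.of_dist_le_mul (K := 1) fun f g => ?_).continuous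
      rw [Real.dist_eq, NNReal.coe_one, one_mul, ← hdist f g]
      exact hestF f g
    have hGcont : Continuous fun f : Lp ℝ 1 (μ.trim hmW) =>
        ∫ x in s, (μ⟦S|m⟧) x * (μ[⇑f|m]) x ∂μ := by
      refine (LipschitzWith.of_dist_le_mul (K := 1) fun f g => ?_).continuous
      rw [Real.dist_eq, NNReal.coe_one, one_mul, ← hdist f g]
      exact hestG f g
    exact isClosed_eq hFcont hGcont
  · -- a.e. congruence
    intro f g hfg hf hPf
    have hfg' : f =ᵐ[μ] g := ae_eq_of_ae_eq_trim hfg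
    have h1 : ∫ x in s, S.indicator f x ∂μ = ∫ x in s, S.indicator g x ∂μ := by
      refine integral_congr_ae (ae_restrict_of_ae ?_)
      filter_upwards [hfg'] with x hx
      classical
      by_cases hxS : x ∈ S <;> simp [Set.indicator, hxS, hx]
    have h2 : ∫ x in s, (μ⟦S|m⟧) x * (μ[f|m]) x ∂μ = ∫ x in s, (μ⟦S|m⟧) x * (μ[g|m]) x ∂μ := by
      refine integral_congr_ae (ae_restrict_of_ae ?_)
      filter_upwards [condExp_congr_ae (μ := μ) (m := m) hfg'] with x hx
      rw [hx]
    rw [← h1, ← h2]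
    exact hPf

end Aux

section Main

lemma ipw_main {Ω : Type*} {m mW : MeasurableSpace Ω} {m0 : MeasurableSpace Ω} (μ : Measure Ω)
    [IsProbabilityMeasure μ] (hm : m ≤ m0) (hmW : mW ≤ m0)
    {S : Set Ω} (hS : MeasurableSet[m0] S)
    (hprod : ∀ T : Set Ω, MeasurableSet[mW] T →
      (μ⟦T ∩ S|m⟧) =ᵐ[μ] fun ω => (μ⟦T|m⟧) ω * (μ⟦S|m⟧) ω)
    {Y₁ : Ω → ℝ} (hY₁ : Integrable Y₁ μ) (hY₁trim : Integrable Y₁ (μ.trim hmW))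
    {e : Ω → ℝ} (he : e = μ⟦S|m⟧) (he0 : ∀ᵐ ω ∂μ, 0 < e ω)
    (hint : Integrable (fun ω => (e ω)⁻¹ * S.indicator Y₁ ω) μ) :
    ∫ ω, (e ω)⁻¹ * S.indicator Y₁ ω ∂μ = ∫ ω, Y₁ ω ∂μ := by
  have hSY₁int : Integrable (S.indicator Y₁) μ := hY₁.indicator hS
  have hkey : (fun x => e x * (μ[Y₁|m]) x) =ᵐ[μ] μ[S.indicator Y₁|m] := by
    rw [he]
    refine ae_eq_condExp_of_forall_setIntegral_eq hm hSY₁int ?_ ?_ ?_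
    · intro t ht hμt
      exact (integrable_condexpS_mul hm hS integrable_condExp
        (stronglyMeasurable_condExp.mono hm).aestronglyMeasurable).integrableOn
    · intro t ht hμt
      exact (ipw_aux hm hmW hS hprod ht hY₁trim).symm
    · exact StronglyMeasurable.aestronglyMeasurable
        (stronglyMeasurable_condExp.mul stronglyMeasurable_condExp)
  have hinv_sm : StronglyMeasurable[m] (fun ω => (e ω)⁻¹) := by
    rw [he]
    exact (stronglyMeasurable_condExp.measurable.inv).stronglyMeasurable
  have hpull : μ[(fun ω => (e ω)⁻¹ * S.indicator Y₁ ω)|m]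
      =ᵐ[μ] fun ω => (e ω)⁻¹ * (μ[S.indicator Y₁|m]) ω := by
    have h := condExp_mul_of_stronglyMeasurable_left (μ := μ) hinv_sm
      (by simpa [Pi.mul_def] using hint) hSY₁int
    simpa [Pi.mul_def] using h
  have hfinal : μ[(fun ω => (e ω)⁻¹ * S.indicator Y₁ ω)|m] =ᵐ[μ] μ[Y₁|m] := by
    filter_upwards [hpull, hkey, he0] with ω h1 h2 h3
    rw [h1, ← h2, ← mul_assoc, inv_mul_cancel₀ (ne_of_gt h3), one_mul]
  calc ∫ ω, (e ω)⁻¹ * S.indicator Y₁ ω ∂μ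
      = ∫ ω, (μ[(fun ω => (e ω)⁻¹ * S.indicator Y₁ ω)|m]) ω ∂μ :=
        (integral_condExp hm).symm
    _ = ∫ ω, (μ[Y₁|m]) ω ∂μ := integral_congr_ae hfinal
    _ = ∫ ω, Y₁ ω ∂μ := integral_condExp hm

end Main

theorem ipw_treated_arm_unbiased
    {Ω : Type*} [MeasurableSpace Ω] [StandardBorelSpace Ω] [Nonempty Ω]
    (μ : Measure Ω) [IsProbabilityMeasure μ] {d : ℕ}
    (X : Ω → (Fin d → ℝ)) (hX : Measurable X)
    (A : Ω → ℝ) (hA : Measurable A) (hA01 : ∀ ω, A ω = 0 ∨ A ω = 1)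
    (Y₀ Y₁ : Ω → ℝ) (hY₀meas : Measurable Y₀) (hY₁meas : Measurable Y₁)
    (hY₀ : Integrable Y₀ μ) (hY₁ : Integrable Y₁ μ)
    (Y : Ω → ℝ) (hY : Y = fun ω => A ω * Y₁ ω + (1 - A ω) * Y₀ ω)
    (hign : CondIndepFun (MeasurableSpace.comap X inferInstance) hX.comap_le
      (fun ω => (Y₀ ω, Y₁ ω)) A μ)
    (e : Ω → ℝ) (he : e = μ[A | MeasurableSpace.comap X inferInstance])
    (he01 : ∀ᵐ ω ∂μ, 0 < e ω ∧ e ω < 1)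
    (hint : Integrable (fun ω => A ω * Y ω / e ω) μ) :
    ∫ ω, A ω * Y ω / e ω ∂μ = ∫ ω, Y₁ ω ∂μ := by
  have hW : Measurable (fun ω => (Y₀ ω, Y₁ ω)) := hY₀meas.prodMk hY₁meas
  have hS : MeasurableSet (A ⁻¹' {1}) := hA (measurableSet_singleton 1)
  have hAS : A = (A ⁻¹' {1}).indicator (fun _ => (1:ℝ)) := by
    funext ω
    rcases hA01 ω with h | h
    · have hω : ω ∉ A ⁻¹' {1} := by simp [h]
      simp [Set.indicator_of_notMem hω, h]
    · have hω : ω ∈ A ⁻¹' {1} := by simp [h]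
      simp [Set.indicator_of_mem hω, h]
  have heS : e = μ⟦A ⁻¹' {1}|MeasurableSpace.comap X inferInstance⟧ := by
    rw [he]
    exact congrArg (fun f => μ[f|MeasurableSpace.comap X inferInstance]) hAS
  have hAY : ∀ ω, A ω * Y ω = (A ⁻¹' {1}).indicator Y₁ ω := by
    intro ω
    rcases hA01 ω with h | h
    · have hω : ω ∉ A ⁻¹' {1} := by simp [h]
      simp [h, Set.indicator_of_notMem hω]
    · have hω : ω ∈ A ⁻¹' {1} := by simp [h]
      simp [hY, h, Set.indicator_of_mem hω]
  have hfun : (fun ω => A ω * Y ω / e ω)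
      = fun ω => (e ω)⁻¹ * (A ⁻¹' {1}).indicator Y₁ ω := by
    funext ω; rw [div_eq_inv_mul, hAY ω]
  rw [hfun] at hint ⊢
  have hprod : ∀ T : Set Ω,
      MeasurableSet[MeasurableSpace.comap (fun ω => (Y₀ ω, Y₁ ω)) inferInstance] T →
      (μ⟦T ∩ A ⁻¹' {1}|MeasurableSpace.comap X inferInstance⟧) =ᵐ[μ]
        fun ω => (μ⟦T|MeasurableSpace.comap X inferInstance⟧) ω *
          (μ⟦A ⁻¹' {1}|MeasurableSpace.comap X inferInstance⟧) ω := by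
    rintro T ⟨t, ht, rfl⟩
    exact (condIndepFun_iff_condExp_inter_preimage_eq_mul hW hA).mp hign t {1} ht
      (measurableSet_singleton 1)
  have hY₁trim : Integrable Y₁ (μ.trim hW.comap_le) := by
    refine hY₁.trim hW.comap_le ?_
    have hWm : Measurable[MeasurableSpace.comap (fun ω => (Y₀ ω, Y₁ ω)) inferInstance]
        (fun ω => (Y₀ ω, Y₁ ω)) := fun t ht => ⟨t, ht, rfl⟩
    exact (measurable_snd.comp hWm).stronglyMeasurable
  exact ipw_main μ hX.comap_le hW.comap_le hS hprod hY₁ hY₁trim heS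
    (he01.mono fun ω h => h.1) hint
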